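/- (Support monotonicity of the coupling.) If f is a C¹ probability density on 𝕋 whose support is contained in a closed arc of length < 1/2, then supp*(P_{Φ_f} f) ⊆ supp*(f), i.e., the coupling map Φ_f maps the minimal closed supporting arc of f into itself. -/

import Mathlib

open MeasureTheory Function Set

/-- The sawtooth interaction function `g` on the circle, lifted 1-periodically to `ℝ`:
`g(u) = u` for `u ∈ (-1/2, 1/2)` and `g(±1/2) = 0`. -/
noncomputable def saw (u : ℝ) : ℝ :=
  if Int.fract (u + 1/2) = 0 then 0 else u - (round u : ℤ)

/-- The lift of the diffusive coupling map `Φ_f(x) = x + ε ∫ g(y-x) f(y) dy`. -/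
noncomputable def Phi (ε : ℝ) (f : ℝ → ℝ) (x : ℝ) : ℝ :=
  x + ε * ∫ y in (0:ℝ)..1, saw (y - x) * f y

/-- Property (F): `f` is a C¹ probability density on the circle (1-periodic on `ℝ`). -/
def PropF (f : ℝ → ℝ) : Prop :=
  ContDiff ℝ 1 f ∧ Function.Periodic f 1 ∧ (∀ x, 0 ≤ f x) ∧ (∫ x in (0:ℝ)..1, f x) = 1

/-- `f'` is Lipschitz. -/
def LipDeriv (f : ℝ → ℝ) : Prop := ∃ L : ℝ, ∀ x y, |deriv f x - deriv f y| ≤ L * |x - y|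

/-- Total variation over one period, for C¹ functions. -/
noncomputable def tvar (f : ℝ → ℝ) : ℝ := ∫ x in (0:ℝ)..1, |deriv f x|

/-- L¹ norm over one period. -/
noncomputable def l1 (f : ℝ → ℝ) : ℝ := ∫ x in (0:ℝ)..1, |f x|

/-- BV norm for C¹ functions. -/
noncomputable def bv (f : ℝ → ℝ) : ℝ := l1 f + tvar f

/-- Transfer (Perron–Frobenius) operator of an `N`-fold covering map given by its
(bijective, strictly monotone) lift `F : ℝ → ℝ`. -/
noncomputable def transfer (F : ℝ → ℝ) (N : ℕ) (u : ℝ → ℝ) (y : ℝ) : ℝ :=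
  ∑ k ∈ Finset.range N,
    u (Function.invFun F (y + k)) / |deriv F (Function.invFun F (y + k))|

/-- Property (T): `T` is (the lift of) a C² `N`-fold covering expanding circle map with
`min |T'| = ω > 1`, `T''` Lipschitz, `N < ω²`. -/
def PropT (T : ℝ → ℝ) (N : ℕ) (ω : ℝ) : Prop :=
  ContDiff ℝ 2 T ∧
  ((∀ x, T (x + 1) = T x + N) ∨ (∀ x, T (x + 1) = T x - N)) ∧
  (∀ x, ω ≤ |deriv T x|) ∧ 1 < ω ∧
  (∃ L : ℝ, ∀ x y, |deriv (deriv T) x - deriv (deriv T) y| ≤ L * |x - y|) ∧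
  (N : ℝ) < ω ^ 2

/-- The self-consistent transfer operator `F_ε(f) = P_{T ∘ Φ_f} f`. -/
noncomputable def Feps (T : ℝ → ℝ) (N : ℕ) (ε : ℝ) (f : ℝ → ℝ) : ℝ → ℝ :=
  transfer (T ∘ Phi ε f) N f

/-- The class `C_{R,S}^c` of densities. -/
def CRSc (R S c : ℝ) : Set (ℝ → ℝ) :=
  {f | PropF f ∧ tvar f ≤ R ∧ (∀ x, |deriv f x| ≤ S) ∧
    ∀ x y, |deriv f x - deriv f y| ≤ c * |x - y|}

/-- Property (F'): `f` satisfies (F), has Lipschitz derivative, and its support avoids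
(an interval of length `1/2` on the circle, i.e.) all integer translates of some `[a, a+1/2]`. -/
def PropF' (f : ℝ → ℝ) : Prop :=
  PropF f ∧ LipDeriv f ∧
    ∃ a : ℝ, ∀ x, f x ≠ 0 → ∀ k : ℤ, x + (k : ℝ) ∉ Set.Icc a (a + 1/2)

/-- The length of the minimal closed arc of the circle containing the support of `f`. -/
noncomputable def suppLen (f : ℝ → ℝ) : ℝ :=
  sInf {L | 0 ≤ L ∧ ∃ a : ℝ, ∀ x, f x ≠ 0 → ∃ k : ℤ, x + (k : ℝ) ∈ Set.Icc a (a + L)}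

/-- Wasserstein-1 distance between the measure `f dλ` on the circle and the point mass `δ_y`,
via Kantorovich–Rubinstein duality (1-Lipschitz periodic test functions). -/
noncomputable def W1delta (f : ℝ → ℝ) (y : ℝ) : ℝ :=
  ⨆ ℓ : {ℓ : ℝ → ℝ // LipschitzWith 1 ℓ ∧ Function.Periodic ℓ 1},
    |(∫ x in (0:ℝ)..1, ℓ.1 x * f x) - ℓ.1 y|

/-- BV norm for (not necessarily C¹) functions of bounded variation. -/
noncomputable def bvBV (u : ℝ → ℝ) : ℝ :=
  l1 u + (eVariationOn u (Set.Icc (0:ℝ) 1)).toReal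

lemma saw_eq_self {u : ℝ} (h1 : -(1/2) < u) (h2 : u < 1/2) : saw u = u := by
  have hfr : Int.fract (u + 1/2) = u + 1/2 :=
    Int.fract_eq_self.2 ⟨by linarith, by linarith⟩
  have hne : Int.fract (u + 1/2) ≠ 0 := by rw [hfr]; exact ne_of_gt (by linarith)
  have hround : round u = 0 := by
    rw [round_eq]
    exact Int.floor_eq_zero_iff.2 ⟨by linarith, by linarith⟩
  unfold saw
  rw [if_neg hne, hround]
  simp

lemma saw_sub_int (u : ℝ) (k : ℤ) : saw (u - k) = saw u := by
  unfold saw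
  have h1 : Int.fract (u - k + 1/2) = Int.fract (u + 1/2) := by
    rw [show u - (k:ℝ) + 1/2 = u + 1/2 - k by ring, Int.fract_sub_intCast]
  have h2 : round (u - (k:ℝ)) = round u - k := round_sub_intCast u k
  rw [h1, h2]
  by_cases h : Int.fract (u + 1/2) = 0 <;> simp [h]

lemma abs_saw_le (u : ℝ) : |saw u| ≤ 1/2 := by
  unfold saw
  split
  · norm_num
  · exact abs_sub_round u

lemma measurable_saw : Measurable saw := by
  unfold saw
  refine Measurable.ite ?_ measurable_const ?_
  · exact (measurable_fract.comp (measurable_id.add_const _)) (measurableSet_singleton 0)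
  · have h : Measurable fun u : ℝ => (round u : ℤ) := by
      simp only [round_eq]
      exact Int.measurable_floor.comp (measurable_id.add_const _)
    exact measurable_id.sub ((measurable_from_top).comp h)

lemma saw_intInt {f : ℝ → ℝ} (hf : Continuous f) (x a b : ℝ) :
    IntervalIntegrable (fun y => saw (y - x) * f y) volume a b := by
  have hg : IntervalIntegrable f volume a b := hf.intervalIntegrable a b
  rw [intervalIntegrable_iff] at hg ⊢
  exact hg.bdd_mul ((measurable_saw.comp (measurable_id.sub_const x)).aestronglyMeasurable)
    (c := 1/2) (Filter.Eventually.of_forall fun y => by simpa using abs_saw_le (y - x))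

/-- support monotonicity of the coupling: if the support of a C¹
probability density `f` is contained (mod 1) in a closed arc `[a,b]` of length `< 1/2`,
then `Φ_f` maps `[a,b]` into itself and the support of `P_{Φ_f} f` is contained (mod 1)
in `[a,b]` as well; hence `supp*(P_{Φ_f} f) ⊆ supp*(f)`. -/
theorem support_monotone (ε : ℝ) (hε0 : 0 ≤ ε) (hε1 : ε < 1)
    (f : ℝ → ℝ) (hf : PropF f)
    (a b : ℝ) (hab : a ≤ b) (hlen : b - a < 1/2)
    (hsupp : ∀ x, f x ≠ 0 → ∃ k : ℤ, x + (k : ℝ) ∈ Set.Icc a b) :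
    Set.MapsTo (Phi ε f) (Set.Icc a b) (Set.Icc a b) ∧
    ∀ y, transfer (Phi ε f) 1 f y ≠ 0 → ∃ k : ℤ, y + (k : ℝ) ∈ Set.Icc a b := by
  obtain ⟨hC1, hper, hpos, hint1⟩ := hf
  have hcont : Continuous f := hC1.continuous
  have hif : ∀ s t : ℝ, IntervalIntegrable f volume s t :=
    fun s t => hcont.intervalIntegrable s t
  have hiyf : ∀ s t : ℝ, IntervalIntegrable (fun y => y * f y) volume s t :=
    fun s t => (continuous_id.mul hcont).intervalIntegrable s t
  have hint_window : ∀ s : ℝ, (∫ y in s..(s+1), f y) = 1 := by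
    intro s
    rw [hper.intervalIntegral_add_eq s 0, zero_add]
    exact hint1
  set c : ℝ := (a+b)/2 - 1/2 with hc
  have hwin : ∀ y ∈ Set.Icc c (c+1), f y ≠ 0 → y ∈ Set.Icc a b := by
    intro y hy hfy
    obtain ⟨k, hk⟩ := hsupp y hfy
    have hk1 := hk.1
    have hk2 := hk.2
    have hy1 := hy.1
    have hy2 := hy.2
    have hk0 : k = 0 := by
      rw [hc] at hy1 hy2
      have h1 : (-1 : ℝ) < (k:ℝ) := by linarith
      have h2 : (k : ℝ) < 1 := by linarith
      have h1' : (-1 : ℤ) < k := by exact_mod_cast h1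
      have h2' : k < 1 := by exact_mod_cast h2
      omega
    rw [hk0] at hk1 hk2
    simp only [Int.cast_zero, add_zero] at hk1 hk2
    exact ⟨hk1, hk2⟩
  have hperI : ∀ x : ℝ, Function.Periodic (fun y => saw (y - x) * f y) 1 := by
    intro x y
    have h := saw_sub_int (y - x + 1) 1
    push_cast at h
    have hsaw : saw (y + 1 - x) = saw (y - x) := by
      rw [show y + 1 - x = y - x + 1 by ring, ← h]
      norm_num
    simp only [hsaw, hper y]
  set M : ℝ := ∫ y in c..(c+1), y * f y with hM
  have key : ∀ x ∈ Set.Icc a b, (∫ y in (0:ℝ)..1, saw (y - x) * f y) = M - x := by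
    intro x hx
    have h01 : (∫ y in (0:ℝ)..1, saw (y - x) * f y)
        = ∫ y in c..(c+1), saw (y - x) * f y := by
      have h := (hperI x).intervalIntegral_add_eq 0 c
      rw [zero_add] at h
      exact h
    have hcong : (∫ y in c..(c+1), saw (y - x) * f y)
        = ∫ y in c..(c+1), (y - x) * f y := by
      apply intervalIntegral.integral_congr
      intro y hy
      rw [Set.uIcc_of_le (by linarith : c ≤ c + 1)] at hy
      by_cases hfy : f y = 0
      · simp [hfy]
      · have hyab := hwin y hy hfy
        have h1 := hyab.1
        have h2 := hyab.2
        have hx1 := hx.1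
        have hx2 := hx.2
        show saw (y - x) * f y = (y - x) * f y
        rw [saw_eq_self (by linarith) (by linarith)]
    have hlin : (∫ y in c..(c+1), (y - x) * f y)
        = (∫ y in c..(c+1), y * f y) - x * ∫ y in c..(c+1), f y := by
      simp_rw [sub_mul]
      rw [intervalIntegral.integral_sub (hiyf _ _) ((hif _ _).const_mul x),
        intervalIntegral.integral_const_mul]
    rw [h01, hcong, hlin, hint_window c, ← hM]
    ring
  have hMa : a ≤ M := by
    have h0 : 0 ≤ ∫ y in c..(c+1), (y - a) * f y := by
      apply intervalIntegral.integral_nonneg (by linarith)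
      intro y hy
      by_cases hfy : f y = 0
      · simp [hfy]
      · have hyab := hwin y hy hfy
        exact mul_nonneg (by linarith [hyab.1]) (hpos y)
    have heq : (∫ y in c..(c+1), (y - a) * f y) = M - a := by
      simp_rw [sub_mul]
      rw [intervalIntegral.integral_sub (hiyf _ _) ((hif _ _).const_mul a),
        intervalIntegral.integral_const_mul, hint_window c, ← hM]
      ring
    linarith
  have hMb : M ≤ b := by
    have h0 : 0 ≤ ∫ y in c..(c+1), (b - y) * f y := by
      apply intervalIntegral.integral_nonneg (by linarith)
      intro y hy
      by_cases hfy : f y = 0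
      · simp [hfy]
      · have hyab := hwin y hy hfy
        exact mul_nonneg (by linarith [hyab.2]) (hpos y)
    have heq : (∫ y in c..(c+1), (b - y) * f y) = b - M := by
      simp_rw [sub_mul]
      rw [intervalIntegral.integral_sub ((hif _ _).const_mul b) (hiyf _ _),
        intervalIntegral.integral_const_mul, hint_window c, ← hM]
      ring
    linarith
  have hmaps : Set.MapsTo (Phi ε f) (Set.Icc a b) (Set.Icc a b) := by
    intro x hx
    have hx1 := hx.1
    have hx2 := hx.2
    have hPx : Phi ε f x = x + ε * (M - x) := by
      simp only [Phi, key x hx]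
    rw [hPx, Set.mem_Icc]
    constructor
    · nlinarith [mul_nonneg hε0 (by linarith : (0:ℝ) ≤ M - a),
        mul_nonneg (by linarith : (0:ℝ) ≤ 1 - ε) (by linarith : (0:ℝ) ≤ x - a)]
    · nlinarith [mul_nonneg hε0 (by linarith : (0:ℝ) ≤ b - M),
        mul_nonneg (by linarith : (0:ℝ) ≤ 1 - ε) (by linarith : (0:ℝ) ≤ b - x)]
  refine ⟨hmaps, ?_⟩
  -- surjectivity of `Phi ε f`
  have hequiv : ∀ (w : ℝ) (k : ℤ), Phi ε f (w + k) = Phi ε f w + k := by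
    intro w k
    have hs : ∀ y : ℝ, saw (y - (w + (k:ℝ))) = saw (y - w) := fun y => by
      rw [show y - (w + (k:ℝ)) = (y - w) - k by ring, saw_sub_int]
    simp only [Phi, hs]
    ring
  have hform : ∀ x : ℝ, (∫ y in (0:ℝ)..1, saw (y - x) * f y)
      = ((∫ y in (0:ℝ)..(x + 1/2), y * f y) - ∫ y in (0:ℝ)..(x - 1/2), y * f y) - x := by
    intro x
    have h01 : (∫ y in (0:ℝ)..1, saw (y - x) * f y)
        = ∫ y in (x - 1/2)..(x - 1/2 + 1), saw (y - x) * f y := by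
      have h := (hperI x).intervalIntegral_add_eq 0 (x - 1/2)
      rw [zero_add] at h
      exact h
    have hae : (∫ y in (x - 1/2)..(x - 1/2 + 1), saw (y - x) * f y)
        = ∫ y in (x - 1/2)..(x - 1/2 + 1), (y - x) * f y := by
      apply intervalIntegral.integral_congr_ae
      have h0 : ∀ᵐ (y:ℝ), y ∉ ({x + 1/2} : Set ℝ) :=
        measure_eq_zero_iff_ae_notMem.mp (measure_singleton _)
      filter_upwards [h0] with y hy0 hy
      rw [Set.uIoc_of_le (by linarith : x - 1/2 ≤ x - 1/2 + 1)] at hy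
      have hne : y ≠ x + 1/2 := by simpa using hy0
      have h1 : x - 1/2 < y := hy.1
      have h2 : y < x + 1/2 := lt_of_le_of_ne (by linarith [hy.2]) hne
      rw [saw_eq_self (by linarith) (by linarith)]
    have hwf : (∫ y in (x - 1/2)..(x - 1/2 + 1), f y) = 1 := hint_window (x - 1/2)
    have hlin : (∫ y in (x - 1/2)..(x - 1/2 + 1), (y - x) * f y)
        = (∫ y in (x - 1/2)..(x - 1/2 + 1), y * f y)
          - x * ∫ y in (x - 1/2)..(x - 1/2 + 1), f y := by
      simp_rw [sub_mul]
      rw [intervalIntegral.integral_sub (hiyf _ _) ((hif _ _).const_mul x),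
        intervalIntegral.integral_const_mul]
    have hadj := intervalIntegral.integral_add_adjacent_intervals
      (hiyf 0 (x - 1/2)) (hiyf (x - 1/2) (x - 1/2 + 1))
    rw [h01, hae, hlin, hwf, show x - 1/2 + 1 = x + 1/2 by ring] at *
    linarith
  have hcontA : Continuous fun t => ∫ y in (0:ℝ)..t, y * f y :=
    intervalIntegral.continuous_primitive (fun s t => hiyf s t) 0
  have hPhi_eq : Phi ε f = fun x => x + ε *
      (((∫ y in (0:ℝ)..(x + 1/2), y * f y) - ∫ y in (0:ℝ)..(x - 1/2), y * f y) - x) :=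
    funext fun x => by simp only [Phi, hform x]
  have hcontPhi : Continuous (Phi ε f) := by
    rw [hPhi_eq]
    have c1 : Continuous fun x : ℝ => ∫ y in (0:ℝ)..(x + 1/2), y * f y :=
      hcontA.comp (continuous_id.add continuous_const)
    have c2 : Continuous fun x : ℝ => ∫ y in (0:ℝ)..(x - 1/2), y * f y :=
      hcontA.comp (continuous_id.sub continuous_const)
    exact continuous_id.add (continuous_const.mul ((c1.sub c2).sub continuous_id))
  have hbnd : ∀ x : ℝ, |∫ y in (0:ℝ)..1, saw (y - x) * f y| ≤ 1/2 := by
    intro x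
    have h1 : |∫ y in (0:ℝ)..1, saw (y - x) * f y| ≤ ∫ y in (0:ℝ)..1, |saw (y - x) * f y| :=
      intervalIntegral.abs_integral_le_integral_abs (by norm_num)
    have h2 : (∫ y in (0:ℝ)..1, |saw (y - x) * f y|) ≤ ∫ y in (0:ℝ)..1, (1/2) * f y := by
      apply intervalIntegral.integral_mono_on (by norm_num)
        ((saw_intInt hcont x 0 1).abs) ((hif 0 1).const_mul _)
      intro y _
      rw [abs_mul, abs_of_nonneg (hpos y)]
      exact mul_le_mul_of_nonneg_right (abs_saw_le _) (hpos y)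
    have h3 : (∫ y in (0:ℝ)..1, (1/2:ℝ) * f y) = 1/2 := by
      rw [intervalIntegral.integral_const_mul, hint1, mul_one]
    linarith
  have hsurj : Function.Surjective (Phi ε f) := by
    apply hcontPhi.surjective
    · apply Filter.tendsto_atTop_mono (f := fun x : ℝ => x + (-1)) (fun x => ?_)
        (Filter.tendsto_atTop_add_const_right _ (-1 : ℝ) Filter.tendsto_id)
      have habs := abs_le.mp (hbnd x)
      have h1 := habs.1
      show x + (-1) ≤ Phi ε f x
      simp only [Phi]
      nlinarith [mul_nonneg hε0
        (by linarith : (0:ℝ) ≤ (∫ y in (0:ℝ)..1, saw (y - x) * f y) + 1/2)]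
    · apply Filter.tendsto_atBot_mono (f := fun x : ℝ => x + 1) (fun x => ?_)
        (Filter.tendsto_atBot_add_const_right _ (1 : ℝ) Filter.tendsto_id)
      have habs := abs_le.mp (hbnd x)
      have h2 := habs.2
      show Phi ε f x ≤ x + 1
      simp only [Phi]
      nlinarith [mul_nonneg hε0
        (by linarith : (0:ℝ) ≤ 1/2 - (∫ y in (0:ℝ)..1, saw (y - x) * f y))]
  intro y hy
  have hy' : f (Function.invFun (Phi ε f) y) ≠ 0 := by
    simp only [transfer, Finset.sum_range_one, Nat.cast_zero, add_zero] at hy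
    exact fun h => hy (by rw [h]; simp)
  have hFz : Phi ε f (Function.invFun (Phi ε f) y) = y := Function.invFun_eq (hsurj y)
  obtain ⟨k, hk⟩ := hsupp _ hy'
  refine ⟨k, ?_⟩
  rw [← hFz, ← hequiv _ k]
  exact hmaps hk
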